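/- Let f : [0,1] → [0,∞) satisfy f(p) = f(1−p) for all p ∈ [0,1], with p ↦ f(p)/p non-increasing on (0,1]. Let 0 ≤ p_1 ≤ … ≤ p_m ≤ 1, let 1 ≤ i ≤ k ≤ m−1. Then (1−p_{k+1})·C_f(m−k; p_{−(k+1)}) − (1−p_i)·C_f(m−k; p_{−i}) ≤ (p_i − p_{k+1})·C_f(m−k−1; p_{−(i,k+1)}) + (1−p_{k+1})·f(p_i) − (1−p_i)·f(p_{k+1}), where p_{−(i,k+1)} denotes the list with both entries i and k+1 removed. -/

import Mathlib

/-- The optimal expected cost `C_f(θ; p)` of sequentially computing the Boolean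
threshold function `Π_θ` on independent Bernoulli variables with parameters given by
the list `p`, where querying a node with parameter `q` costs `f q`.
`cost f θ p = 0` if `θ = 0` or `θ > p.length`, and otherwise it is the minimum over
nodes `i` of `f p_i + p_i • cost f (θ-1) p_{-i} + (1 - p_i) • cost f θ p_{-i}`. -/
noncomputable def cost (f : ℝ → ℝ) : ℕ → List ℝ → ℝ
  | 0, _ => 0
  | (θ+1), p =>
      if p.length < θ + 1 then 0
      else ⨅ i : Fin p.length,
        (f (p.get i) + p.get i * cost f θ (p.eraseIdx i.1)
          + (1 - p.get i) * cost f (θ+1) (p.eraseIdx i.1))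
termination_by θ p => p.length
decreasing_by
  all_goals (have h := i.isLt; simp [List.length_eraseIdx, h]; omega)

theorem cost_zero (f : ℝ → ℝ) (q : List ℝ) : cost f 0 q = 0 := by rw [cost]

theorem cost_of_lt (f : ℝ → ℝ) {θ : ℕ} {q : List ℝ} (h : q.length < θ) : cost f θ q = 0 := by
  cases θ with
  | zero => exact cost_zero f q
  | succ θ => rw [cost, if_pos h]

theorem cost_succ (f : ℝ → ℝ) {θ : ℕ} {q : List ℝ} (h : θ + 1 ≤ q.length) :
    cost f (θ+1) q = ⨅ i : Fin q.length,
        (f (q[i.1]'i.isLt) + (q[i.1]'i.isLt) * cost f θ (q.eraseIdx i.1)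
          + (1 - q[i.1]'i.isLt) * cost f (θ+1) (q.eraseIdx i.1)) := by
  rw [cost, if_neg (by omega)]
  simp only [List.get_eq_getElem]

theorem my_eraseIdx_comm {α : Type*} (q : List α) {u t : ℕ} (h : u ≤ t) (ht : t + 1 < q.length) :
    (q.eraseIdx (t+1)).eraseIdx u = (q.eraseIdx u).eraseIdx t := by
  have l1 : (q.eraseIdx (t+1)).length = q.length - 1 := by
    rw [List.length_eraseIdx, if_pos (by omega)]
  have l2 : (q.eraseIdx u).length = q.length - 1 := by
    rw [List.length_eraseIdx, if_pos (by omega)]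
  have l3 : ((q.eraseIdx (t+1)).eraseIdx u).length = q.length - 2 := by
    rw [List.length_eraseIdx, if_pos (by omega)]; omega
  have l4 : ((q.eraseIdx u).eraseIdx t).length = q.length - 2 := by
    rw [List.length_eraseIdx, if_pos (by omega)]; omega
  apply List.ext_getElem
  · omega
  · intro j h1 h2
    simp only [List.getElem_eraseIdx]
    split_ifs <;> (repeat' first | rfl | omega | rw [dif_pos (by omega)] | rw [dif_neg (by omega)])

theorem bounds_eraseIdx {P : ℝ → Prop} {q : List ℝ} (h : ∀ x ∈ q, P x) (i : ℕ) :
    ∀ x ∈ q.eraseIdx i, P x := fun x hx => h x ((List.eraseIdx_sublist q i).subset hx)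

theorem sorted_eraseIdx {q : List ℝ} (h : q.Pairwise (· ≤ ·)) (i : ℕ) :
    (q.eraseIdx i).Pairwise (· ≤ ·) := h.sublist (List.eraseIdx_sublist q i)

theorem sorted_le {q : List ℝ} (hs : q.Pairwise (· ≤ ·)) {u t : ℕ} (h : u ≤ t)
    (ht : t < q.length) : q[u]'(lt_of_le_of_lt h ht) ≤ q[t] := by
  rcases h.eq_or_lt with rfl | hlt
  · exact le_rfl
  · exact List.pairwise_iff_getElem.mp hs u t _ ht hlt

theorem cost_nonneg {f : ℝ → ℝ} (hf : ∀ x ∈ Set.Icc (0:ℝ) 1, 0 ≤ f x) :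
    ∀ (n : ℕ) (q : List ℝ), q.length ≤ n → (∀ x ∈ q, 0 ≤ x) → (∀ x ∈ q, x ≤ 1) →
    ∀ θ, 0 ≤ cost f θ q := by
  intro n
  induction n with
  | zero =>
    intro q hq h0 h1 θ
    cases θ with
    | zero => rw [cost_zero]
    | succ θ => rw [cost_of_lt f (by omega)]
  | succ n ih =>
    intro q hq h0 h1 θ
    cases θ with
    | zero => rw [cost_zero]
    | succ θ =>
      by_cases hl : q.length < θ + 1
      · rw [cost_of_lt f hl]
      · rw [cost_succ f (by omega)]
        apply Real.iInf_nonneg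
        intro i
        have hm : q[i.1]'i.isLt ∈ q := List.getElem_mem _
        have h0i := h0 _ hm
        have h1i := h1 _ hm
        have hle : (q.eraseIdx i.1).length ≤ n := by
          simp [List.length_eraseIdx, i.isLt]; omega
        have c1 := ih (q.eraseIdx i.1) hle (bounds_eraseIdx h0 _) (bounds_eraseIdx h1 _) θ
        have c2 := ih (q.eraseIdx i.1) hle (bounds_eraseIdx h0 _) (bounds_eraseIdx h1 _) (θ+1)
        have hfi := hf _ ⟨h0i, h1i⟩
        nlinarith

theorem cost_le_term (f : ℝ → ℝ) {θ : ℕ} {q : List ℝ} (h : θ + 1 ≤ q.length)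
    {t : ℕ} (ht : t < q.length) :
    cost f (θ+1) q ≤ f q[t] + q[t] * cost f θ (q.eraseIdx t)
      + (1 - q[t]) * cost f (θ+1) (q.eraseIdx t) := by
  rw [cost_succ f h]
  exact ciInf_le (Set.Finite.bddBelow (Set.finite_range _)) (⟨t, ht⟩ : Fin q.length)
theorem getElem_erase_lt' {α : Type*} (q : List α) {i t : ℕ} (h : i < t)
    (hi : i < (q.eraseIdx t).length) (hq : i < q.length) :
    (q.eraseIdx t)[i] = q[i] := by
  rw [List.getElem_eraseIdx, dif_pos h]

theorem getElem_erase_ge' {α : Type*} (q : List α) {i t j : ℕ} (hij : t ≤ i) (hj : i + 1 = j)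
    (hi : i < (q.eraseIdx t).length) (hq : j < q.length) :
    (q.eraseIdx t)[i] = q[j] := by
  subst hj; rw [List.getElem_eraseIdx, dif_neg (by omega)]

theorem erase_comm' {α : Type*} (q : List α) {u t s : ℕ} (h : u ≤ t) (hst : t + 1 = s)
    (hlt : s < q.length) :
    (q.eraseIdx s).eraseIdx u = (q.eraseIdx u).eraseIdx t := by
  subst hst; exact my_eraseIdx_comm q h hlt

theorem ratio_le {f : ℝ → ℝ} (hf0 : ∀ x ∈ Set.Icc (0:ℝ) 1, 0 ≤ f x)
    (hfm : AntitoneOn (fun x => f x / x) (Set.Ioc (0:ℝ) 1))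
    {a b : ℝ} (ha0 : 0 ≤ a) (hab : a ≤ b) (hb1 : b ≤ 1) : a * f b ≤ b * f a := by
  rcases eq_or_lt_of_le ha0 with h | h
  · have ha : a = 0 := h.symm
    subst ha
    have h0f : 0 ≤ f 0 := hf0 0 ⟨le_rfl, zero_le_one⟩
    nlinarith
  · have hb0 : 0 < b := lt_of_lt_of_le h hab
    have hm := hfm (Set.mem_Ioc.mpr ⟨h, by linarith⟩) (Set.mem_Ioc.mpr ⟨hb0, hb1⟩) hab
    simp only at hm
    rw [div_le_div_iff₀ hb0 h] at hm
    nlinarith [hm]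

theorem ratio_le' {f : ℝ → ℝ} (hf0 : ∀ x ∈ Set.Icc (0:ℝ) 1, 0 ≤ f x)
    (hfs : ∀ x ∈ Set.Icc (0:ℝ) 1, f x = f (1 - x))
    (hfm : AntitoneOn (fun x => f x / x) (Set.Ioc (0:ℝ) 1))
    {x y : ℝ} (hx0 : 0 ≤ x) (hxy : x ≤ y) (hy1 : y ≤ 1) :
    (1 - y) * f x ≤ (1 - x) * f y := by
  have h1 := ratio_le hf0 hfm (a := 1 - y) (b := 1 - x) (by linarith) (by linarith) (by linarith)
  rw [hfs x ⟨hx0, by linarith⟩, hfs y ⟨by linarith, hy1⟩]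
  convert h1 using 3 <;> ring

/-- `MP f n`: for sorted lists of length `n` with entries in `[0,1]` and threshold
`θ` with `t + θ = n`, querying the pivot (index `t = n - θ`) first is optimal. -/
def MP (f : ℝ → ℝ) (n : ℕ) : Prop :=
  ∀ q : List ℝ, q.length = n → (∀ x ∈ q, 0 ≤ x) → (∀ x ∈ q, x ≤ 1) →
    q.Pairwise (· ≤ ·) → ∀ θ t : ℕ, 1 ≤ θ → t + θ = n → ∀ (ht : t < q.length),
    cost f θ q = f (q[t]'ht) + (q[t]'ht) * cost f (θ-1) (q.eraseIdx t)
      + (1 - q[t]'ht) * cost f θ (q.eraseIdx t)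

theorem len_erase {α : Type*} (q : List α) {t : ℕ} (ht : t < q.length) :
    (q.eraseIdx t).length = q.length - 1 := by
  rw [List.length_eraseIdx, if_pos ht]

/-- L4'' : `t` is the pivot for `(s, q)`, `u < t`. -/
theorem L4pp {f : ℝ → ℝ} {q : List ℝ} (hMP : ∀ m, m < q.length → MP f m)
    (h0 : ∀ x ∈ q, 0 ≤ x) (h1 : ∀ x ∈ q, x ≤ 1) (hs : q.Pairwise (· ≤ ·))
    {s t u : ℕ} (hs1 : 1 ≤ s) (hpat : t + s = q.length) (hut : u < t)
    (ht : t < q.length) (hu : u < q.length) :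
    (q[t]'ht) * cost f s (q.eraseIdx t) - (q[u]'hu) * cost f s (q.eraseIdx u)
      ≤ ((q[t]'ht) - (q[u]'hu)) * cost f s ((q.eraseIdx t).eraseIdx u)
        + (q[t]'ht) * f (q[u]'hu) - (q[u]'hu) * f (q[t]'ht) := by
  obtain ⟨s', rfl⟩ : ∃ s', s = s' + 1 := ⟨s - 1, by omega⟩
  have len_et := len_erase q ht
  have len_eu := len_erase q hu
  have hb0 : 0 ≤ q[t]'ht := h0 _ (List.getElem_mem _)
  have hu' : u < (q.eraseIdx t).length := by omega
  have step1 : cost f (s'+1) (q.eraseIdx t) ≤ f (q[u]'hu)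
      + (q[u]'hu) * cost f s' ((q.eraseIdx t).eraseIdx u)
      + (1 - q[u]'hu) * cost f (s'+1) ((q.eraseIdx t).eraseIdx u) := by
    have h := cost_le_term f (θ := s') (by omega) hu'
    rwa [getElem_erase_lt' q hut hu' hu] at h
  have hcomm : (q.eraseIdx u).eraseIdx (t-1) = (q.eraseIdx t).eraseIdx u :=
    (erase_comm' q (show u ≤ t - 1 by omega) (show t - 1 + 1 = t by omega) ht).symm
  have step2 : cost f (s'+1) (q.eraseIdx u) = f (q[t]'ht)
      + (q[t]'ht) * cost f s' ((q.eraseIdx t).eraseIdx u)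
      + (1 - q[t]'ht) * cost f (s'+1) ((q.eraseIdx t).eraseIdx u) := by
    have h := hMP (q.length - 1) (by omega) (q.eraseIdx u) (by omega)
      (bounds_eraseIdx h0 u) (bounds_eraseIdx h1 u) (sorted_eraseIdx hs u)
      (s'+1) (t-1) (by omega) (by omega) (by omega)
    rwa [getElem_erase_ge' q (by omega) (show t - 1 + 1 = t by omega) (by omega) ht,
      hcomm, Nat.add_sub_cancel] at h
  rw [step2]
  nlinarith [mul_le_mul_of_nonneg_left step1 hb0]

/-- L4 : `t` has `θ - 1` elements above it (`t + θ = n`), `u < t`. -/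
theorem L4 {f : ℝ → ℝ} {q : List ℝ} (hMP : ∀ m, m < q.length → MP f m)
    (h0 : ∀ x ∈ q, 0 ≤ x) (h1 : ∀ x ∈ q, x ≤ 1) (hs : q.Pairwise (· ≤ ·))
    {θ t u : ℕ} (hθ : 1 ≤ θ) (hpat : t + θ = q.length) (hut : u < t)
    (ht : t < q.length) (hu : u < q.length) :
    (1 - q[t]'ht) * cost f θ (q.eraseIdx t) - (1 - q[u]'hu) * cost f θ (q.eraseIdx u)
      ≤ ((q[u]'hu) - (q[t]'ht)) * cost f (θ-1) ((q.eraseIdx t).eraseIdx u)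
        + (1 - q[t]'ht) * f (q[u]'hu) - (1 - q[u]'hu) * f (q[t]'ht) := by
  obtain ⟨θ', rfl⟩ : ∃ θ', θ = θ' + 1 := ⟨θ - 1, by omega⟩
  have len_et := len_erase q ht
  have len_eu := len_erase q hu
  have hb1 : q[t]'ht ≤ 1 := h1 _ (List.getElem_mem _)
  have hu' : u < (q.eraseIdx t).length := by omega
  have step1 : cost f (θ'+1) (q.eraseIdx t) ≤ f (q[u]'hu)
      + (q[u]'hu) * cost f θ' ((q.eraseIdx t).eraseIdx u)
      + (1 - q[u]'hu) * cost f (θ'+1) ((q.eraseIdx t).eraseIdx u) := by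
    have h := cost_le_term f (θ := θ') (by omega) hu'
    rwa [getElem_erase_lt' q hut hu' hu] at h
  have hcomm : (q.eraseIdx u).eraseIdx (t-1) = (q.eraseIdx t).eraseIdx u :=
    (erase_comm' q (show u ≤ t - 1 by omega) (show t - 1 + 1 = t by omega) ht).symm
  have step2 : cost f (θ'+1) (q.eraseIdx u) = f (q[t]'ht)
      + (q[t]'ht) * cost f θ' ((q.eraseIdx t).eraseIdx u)
      + (1 - q[t]'ht) * cost f (θ'+1) ((q.eraseIdx t).eraseIdx u) := by
    have h := hMP (q.length - 1) (by omega) (q.eraseIdx u) (by omega)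
      (bounds_eraseIdx h0 u) (bounds_eraseIdx h1 u) (sorted_eraseIdx hs u)
      (θ'+1) (t-1) (by omega) (by omega) (by omega)
    rwa [getElem_erase_ge' q (by omega) (show t - 1 + 1 = t by omega) (by omega) ht,
      hcomm, Nat.add_sub_cancel] at h
  rw [step2, Nat.add_sub_cancel]
  nlinarith [mul_le_mul_of_nonneg_left step1 (show (0:ℝ) ≤ 1 - q[t]'ht by linarith)]
/-- L4' : `t` has `s` elements above it (`t + s + 1 = n`), `u < t`. -/
theorem L4p {f : ℝ → ℝ} (hf0 : ∀ x ∈ Set.Icc (0:ℝ) 1, 0 ≤ f x)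
    (hfm : AntitoneOn (fun x => f x / x) (Set.Ioc (0:ℝ) 1)) :
    ∀ n : ℕ, (∀ m, m < n → MP f m) → ∀ q : List ℝ, q.length = n →
    (∀ x ∈ q, 0 ≤ x) → (∀ x ∈ q, x ≤ 1) → q.Pairwise (· ≤ ·) →
    ∀ s t u : ℕ, t + s + 1 = n → u < t → ∀ (ht : t < q.length) (hu : u < q.length),
    (q[t]'ht) * cost f s (q.eraseIdx t) - (q[u]'hu) * cost f s (q.eraseIdx u)
      ≤ ((q[t]'ht) - (q[u]'hu)) * cost f s ((q.eraseIdx t).eraseIdx u)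
        + (q[t]'ht) * f (q[u]'hu) - (q[u]'hu) * f (q[t]'ht) := by
  intro n
  induction n using Nat.strong_induction_on with
  | _ n IH =>
  intro hMP q hqn h0 h1 hs s t u hpat hut ht hu
  have ha0 : 0 ≤ q[u]'hu := h0 _ (List.getElem_mem _)
  have hb1 : q[t]'ht ≤ 1 := h1 _ (List.getElem_mem _)
  have hab : q[u]'hu ≤ q[t]'ht := sorted_le hs hut.le ht
  cases s with
  | zero =>
    rw [cost_zero, cost_zero, cost_zero]
    have hr := ratio_le hf0 hfm ha0 hab hb1
    linarith
  | succ s' =>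
    have htn : t + 1 < q.length := by omega
    have len_et := len_erase q ht
    have len_eu := len_erase q hu
    have len_et1 := len_erase q htn
    have hu' : u < (q.eraseIdx t).length := by omega
    have ht' : t < (q.eraseIdx t).length := by omega
    have lenY : ((q.eraseIdx t).eraseIdx u).length = q.length - 2 := by
      rw [len_erase _ hu', len_et]; omega
    -- value facts
    have hvt : (q.eraseIdx t)[t]'ht' = q[t+1]'htn :=
      getElem_erase_ge' q (le_refl t) rfl ht' htn
    have hvu : (q.eraseIdx u)[t]'(by omega) = q[t+1]'htn :=
      getElem_erase_ge' q (by omega) rfl (by omega) htn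
    have hvY : ((q.eraseIdx t).eraseIdx u)[t-1]'(by omega) = q[t+1]'htn := by
      rw [getElem_erase_ge' (q.eraseIdx t) (show u ≤ t-1 by omega)
        (show t - 1 + 1 = t by omega) (by omega) ht']
      exact hvt
    -- list identities
    have ce1 : (q.eraseIdx t).eraseIdx t = (q.eraseIdx (t+1)).eraseIdx t :=
      (erase_comm' q (le_refl t) rfl htn).symm
    have ce2 : (q.eraseIdx u).eraseIdx t = (q.eraseIdx (t+1)).eraseIdx u :=
      (erase_comm' q hut.le rfl htn).symm
    have ce3 : ((q.eraseIdx t).eraseIdx u).eraseIdx (t-1)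
        = ((q.eraseIdx (t+1)).eraseIdx t).eraseIdx u := by
      have c := erase_comm' (q.eraseIdx t) (show u ≤ t-1 by omega)
        (show t - 1 + 1 = t by omega) ht'
      have c2 := c.symm
      rw [ce1] at c2
      exact c2
    -- expansions via the pivot q[t+1]
    have e1 : cost f (s'+1) (q.eraseIdx t) = f (q[t+1]'htn)
        + (q[t+1]'htn) * cost f s' ((q.eraseIdx (t+1)).eraseIdx t)
        + (1 - q[t+1]'htn) * cost f (s'+1) ((q.eraseIdx (t+1)).eraseIdx t) := by
      have h := hMP (q.length - 1) (by omega) (q.eraseIdx t) (by omega)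
        (bounds_eraseIdx h0 t) (bounds_eraseIdx h1 t) (sorted_eraseIdx hs t)
        (s'+1) t (by omega) (by omega) ht'
      rwa [hvt, ce1, Nat.add_sub_cancel] at h
    have e2 : cost f (s'+1) (q.eraseIdx u) = f (q[t+1]'htn)
        + (q[t+1]'htn) * cost f s' ((q.eraseIdx (t+1)).eraseIdx u)
        + (1 - q[t+1]'htn) * cost f (s'+1) ((q.eraseIdx (t+1)).eraseIdx u) := by
      have h := hMP (q.length - 1) (by omega) (q.eraseIdx u) (by omega)
        (bounds_eraseIdx h0 u) (bounds_eraseIdx h1 u) (sorted_eraseIdx hs u)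
        (s'+1) t (by omega) (by omega) (by omega)
      rwa [hvu, ce2, Nat.add_sub_cancel] at h
    have e3 : cost f (s'+1) ((q.eraseIdx t).eraseIdx u) = f (q[t+1]'htn)
        + (q[t+1]'htn) * cost f s' (((q.eraseIdx (t+1)).eraseIdx t).eraseIdx u)
        + (1 - q[t+1]'htn) * cost f (s'+1) (((q.eraseIdx (t+1)).eraseIdx t).eraseIdx u) := by
      have h := hMP (q.length - 2) (by omega) ((q.eraseIdx t).eraseIdx u) (by omega)
        (bounds_eraseIdx (bounds_eraseIdx h0 t) u) (bounds_eraseIdx (bounds_eraseIdx h1 t) u)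
        (sorted_eraseIdx (sorted_eraseIdx hs t) u)
        (s'+1) (t-1) (by omega) (by omega) (by omega)
      rwa [hvY, ce3, Nat.add_sub_cancel] at h
    -- values in r := q.eraseIdx (t+1)
    have ht'' : t < (q.eraseIdx (t+1)).length := by omega
    have hu'' : u < (q.eraseIdx (t+1)).length := by omega
    have hrt : (q.eraseIdx (t+1))[t]'ht'' = q[t]'ht :=
      getElem_erase_lt' q (by omega) ht'' ht
    have hru : (q.eraseIdx (t+1))[u]'hu'' = q[u]'hu :=
      getElem_erase_lt' q (by omega) hu'' hu
    -- recursive bounds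
    have sub1 := IH (n-1) (by omega) (fun m hm => hMP m (by omega)) (q.eraseIdx (t+1))
      (by omega) (bounds_eraseIdx h0 _) (bounds_eraseIdx h1 _) (sorted_eraseIdx hs _)
      s' t u (by omega) hut ht'' hu''
    rw [hrt, hru] at sub1
    have sub2 := L4pp (q := q.eraseIdx (t+1)) (fun m hm => hMP m (by omega))
      (bounds_eraseIdx h0 _) (bounds_eraseIdx h1 _) (sorted_eraseIdx hs _)
      (s := s'+1) (t := t) (u := u) (by omega) (by omega) hut ht'' hu''
    rw [hrt, hru] at sub2
    -- combine
    have hc0 : 0 ≤ q[t+1]'htn := h0 _ (List.getElem_mem _)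
    have hc1 : q[t+1]'htn ≤ 1 := h1 _ (List.getElem_mem _)
    rw [e1, e2, e3]
    nlinarith [mul_le_mul_of_nonneg_left sub1 hc0,
      mul_le_mul_of_nonneg_left sub2 (show (0:ℝ) ≤ 1 - q[t+1]'htn by linarith)]
/-- L4b' : `t` is the pivot (`t + θ = n`), `u > t`, thresholds `θ - 1`. -/
theorem L4bp {f : ℝ → ℝ} {q : List ℝ} (hMP : ∀ m, m < q.length → MP f m)
    (h0 : ∀ x ∈ q, 0 ≤ x) (h1 : ∀ x ∈ q, x ≤ 1) (hs : q.Pairwise (· ≤ ·))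
    {θ t u : ℕ} (h2θ : 2 ≤ θ) (hpat : t + θ = q.length) (htu : t < u)
    (hu : u < q.length) (ht : t < q.length) :
    (q[t]'ht) * cost f (θ-1) (q.eraseIdx t) - (q[u]'hu) * cost f (θ-1) (q.eraseIdx u)
      ≤ ((q[t]'ht) - (q[u]'hu)) * cost f (θ-1) ((q.eraseIdx t).eraseIdx (u-1))
        + (q[t]'ht) * f (q[u]'hu) - (q[u]'hu) * f (q[t]'ht) := by
  obtain ⟨s', rfl⟩ : ∃ s', θ = s' + 2 := ⟨θ - 2, by omega⟩
  have len_et := len_erase q ht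
  have len_eu := len_erase q hu
  have hb0 : 0 ≤ q[t]'ht := h0 _ (List.getElem_mem _)
  have hu' : u - 1 < (q.eraseIdx t).length := by omega
  have step1 : cost f (s'+1) (q.eraseIdx t) ≤ f (q[u]'hu)
      + (q[u]'hu) * cost f s' ((q.eraseIdx t).eraseIdx (u-1))
      + (1 - q[u]'hu) * cost f (s'+1) ((q.eraseIdx t).eraseIdx (u-1)) := by
    have h := cost_le_term f (θ := s') (by omega) hu'
    rwa [getElem_erase_ge' q (by omega) (show u - 1 + 1 = u by omega) hu' hu] at h
  have hcomm : (q.eraseIdx u).eraseIdx t = (q.eraseIdx t).eraseIdx (u-1) :=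
    erase_comm' q (show t ≤ u - 1 by omega) (show u - 1 + 1 = u by omega) hu
  have step2 : cost f (s'+1) (q.eraseIdx u) = f (q[t]'ht)
      + (q[t]'ht) * cost f s' ((q.eraseIdx t).eraseIdx (u-1))
      + (1 - q[t]'ht) * cost f (s'+1) ((q.eraseIdx t).eraseIdx (u-1)) := by
    have h := hMP (q.length - 1) (by omega) (q.eraseIdx u) (by omega)
      (bounds_eraseIdx h0 u) (bounds_eraseIdx h1 u) (sorted_eraseIdx hs u)
      (s'+1) t (by omega) (by omega) (by omega)
    rwa [getElem_erase_lt' q htu (by omega) ht, hcomm, Nat.add_sub_cancel] at h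
  have hθ1 : s' + 2 - 1 = s' + 1 := by omega
  rw [hθ1, step2]
  nlinarith [mul_le_mul_of_nonneg_left step1 hb0]

/-- L4b : `u > t`, where `t + θ = n` (pattern A) or `t + θ + 1 = n` (pattern B). -/
theorem L4b {f : ℝ → ℝ} (hf0 : ∀ x ∈ Set.Icc (0:ℝ) 1, 0 ≤ f x)
    (hfs : ∀ x ∈ Set.Icc (0:ℝ) 1, f x = f (1 - x))
    (hfm : AntitoneOn (fun x => f x / x) (Set.Ioc (0:ℝ) 1)) :
    ∀ n : ℕ, (∀ m, m < n → MP f m) → ∀ q : List ℝ, q.length = n →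
    (∀ x ∈ q, 0 ≤ x) → (∀ x ∈ q, x ≤ 1) → q.Pairwise (· ≤ ·) →
    ∀ θ t u : ℕ, 1 ≤ θ → (t + θ = n ∨ t + θ + 1 = n) → t < u →
    ∀ (hu : u < q.length) (ht : t < q.length),
    (1 - q[t]'ht) * cost f θ (q.eraseIdx t) - (1 - q[u]'hu) * cost f θ (q.eraseIdx u)
      ≤ ((q[u]'hu) - (q[t]'ht)) * cost f (θ-1) ((q.eraseIdx t).eraseIdx (u-1))
        + (1 - q[t]'ht) * f (q[u]'hu) - (1 - q[u]'hu) * f (q[t]'ht) := by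
  intro n
  induction n using Nat.strong_induction_on with
  | _ n IH =>
  intro hMP q hqn h0 h1 hs θ t u hθ hpat htu hu ht
  have hb0 : 0 ≤ q[t]'ht := h0 _ (List.getElem_mem _)
  have hb1 : q[t]'ht ≤ 1 := h1 _ (List.getElem_mem _)
  have ha0 : 0 ≤ q[u]'hu := h0 _ (List.getElem_mem _)
  have ha1 : q[u]'hu ≤ 1 := h1 _ (List.getElem_mem _)
  have hba : q[t]'ht ≤ q[u]'hu := sorted_le hs htu.le hu
  have len_et := len_erase q ht
  have len_eu := len_erase q hu
  rcases hpat with hpat | hpat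
  · -- pattern A : t + θ = n
    rcases Nat.eq_zero_or_pos t with rfl | htpos
    · -- t = 0, θ = n : everything degenerate
      have l1 : ((q.eraseIdx 0).eraseIdx (u-1)).length = q.length - 2 := by
        rw [len_erase _ (show u - 1 < (q.eraseIdx 0).length by omega)]; omega
      rw [cost_of_lt f (by omega), cost_of_lt f (by omega), cost_of_lt f (by omega)]
      have := ratio_le' hf0 hfs hfm hb0 hba ha1
      linarith
    · -- t ≥ 1
      have hθ2 : 2 ≤ θ := by omega
      obtain ⟨θ', rfl⟩ : ∃ θ', θ = θ' + 2 := ⟨θ - 2, by omega⟩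
      have htn : t - 1 < q.length := by omega
      have len_et1 := len_erase q htn
      have ht' : t - 1 < (q.eraseIdx t).length := by omega
      have hu1' : u - 1 < (q.eraseIdx t).length := by omega
      have lenX : ((q.eraseIdx t).eraseIdx (u-1)).length = q.length - 2 := by
        rw [len_erase _ hu1', len_et]; omega
      -- value facts : pivot value is d = q[t-1]
      have hvt : (q.eraseIdx t)[t-1]'ht' = q[t-1]'htn :=
        getElem_erase_lt' q (by omega) ht' htn
      have hvu : (q.eraseIdx u)[t-1]'(by omega) = q[t-1]'htn :=
        getElem_erase_lt' q (by omega) (by omega) htn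
      have hvX : ((q.eraseIdx t).eraseIdx (u-1))[t-1]'(by omega) = q[t-1]'htn := by
        rw [getElem_erase_lt' (q.eraseIdx t) (show t-1 < u-1 by omega) (by omega) ht']
        exact hvt
      -- list identities, with r := q.eraseIdx (t-1)
      have ce1 : (q.eraseIdx t).eraseIdx (t-1) = (q.eraseIdx (t-1)).eraseIdx (t-1) :=
        erase_comm' q (le_refl (t-1)) (show t - 1 + 1 = t by omega) ht
      have ce2 : (q.eraseIdx u).eraseIdx (t-1) = (q.eraseIdx (t-1)).eraseIdx (u-1) :=
        erase_comm' q (show t - 1 ≤ u - 1 by omega) (show u - 1 + 1 = u by omega) hu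
      have ce3 : ((q.eraseIdx t).eraseIdx (u-1)).eraseIdx (t-1)
          = ((q.eraseIdx (t-1)).eraseIdx (t-1)).eraseIdx (u-2) := by
        have c := erase_comm' (q.eraseIdx t) (show t - 1 ≤ u - 2 by omega)
          (show u - 2 + 1 = u - 1 by omega) (by omega)
        rw [ce1] at c
        exact c
      -- expansions via the pivot d = q[t-1]
      have e1 : cost f (θ'+2) (q.eraseIdx t) = f (q[t-1]'htn)
          + (q[t-1]'htn) * cost f (θ'+1) ((q.eraseIdx (t-1)).eraseIdx (t-1))
          + (1 - q[t-1]'htn) * cost f (θ'+2) ((q.eraseIdx (t-1)).eraseIdx (t-1)) := by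
        have h := hMP (q.length - 1) (by omega) (q.eraseIdx t) (by omega)
          (bounds_eraseIdx h0 t) (bounds_eraseIdx h1 t) (sorted_eraseIdx hs t)
          (θ'+2) (t-1) (by omega) (by omega) ht'
        rwa [hvt, ce1, show θ' + 2 - 1 = θ' + 1 by omega] at h
      have e2 : cost f (θ'+2) (q.eraseIdx u) = f (q[t-1]'htn)
          + (q[t-1]'htn) * cost f (θ'+1) ((q.eraseIdx (t-1)).eraseIdx (u-1))
          + (1 - q[t-1]'htn) * cost f (θ'+2) ((q.eraseIdx (t-1)).eraseIdx (u-1)) := by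
        have h := hMP (q.length - 1) (by omega) (q.eraseIdx u) (by omega)
          (bounds_eraseIdx h0 u) (bounds_eraseIdx h1 u) (sorted_eraseIdx hs u)
          (θ'+2) (t-1) (by omega) (by omega) (by omega)
        rwa [hvu, ce2, show θ' + 2 - 1 = θ' + 1 by omega] at h
      have e3 : cost f (θ'+1) ((q.eraseIdx t).eraseIdx (u-1)) = f (q[t-1]'htn)
          + (q[t-1]'htn) * cost f θ' (((q.eraseIdx (t-1)).eraseIdx (t-1)).eraseIdx (u-2))
          + (1 - q[t-1]'htn) * cost f (θ'+1) (((q.eraseIdx (t-1)).eraseIdx (t-1)).eraseIdx (u-2)) := by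
        have h := hMP (q.length - 2) (by omega) ((q.eraseIdx t).eraseIdx (u-1)) (by omega)
          (bounds_eraseIdx (bounds_eraseIdx h0 t) _) (bounds_eraseIdx (bounds_eraseIdx h1 t) _)
          (sorted_eraseIdx (sorted_eraseIdx hs t) _)
          (θ'+1) (t-1) (by omega) (by omega) (by omega)
        rwa [hvX, ce3, Nat.add_sub_cancel] at h
      -- values in r := q.eraseIdx (t-1)
      have ht'' : t - 1 < (q.eraseIdx (t-1)).length := by omega
      have hu'' : u - 1 < (q.eraseIdx (t-1)).length := by omega
      have hrt : (q.eraseIdx (t-1))[t-1]'ht'' = q[t]'ht :=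
        getElem_erase_ge' q (le_refl (t-1)) (show t - 1 + 1 = t by omega) ht'' ht
      have hru : (q.eraseIdx (t-1))[u-1]'hu'' = q[u]'hu :=
        getElem_erase_ge' q (by omega) (show u - 1 + 1 = u by omega) hu'' hu
      -- recursive bounds on r
      have sub1 := IH (n-1) (by omega) (fun m hm => hMP m (by omega)) (q.eraseIdx (t-1))
        (by omega) (bounds_eraseIdx h0 _) (bounds_eraseIdx h1 _) (sorted_eraseIdx hs _)
        (θ'+1) (t-1) (u-1) (by omega) (Or.inr (by omega)) (by omega) hu'' ht''
      rw [hrt, hru, Nat.add_sub_cancel, show u - 1 - 1 = u - 2 by omega] at sub1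
      have sub2 := IH (n-1) (by omega) (fun m hm => hMP m (by omega)) (q.eraseIdx (t-1))
        (by omega) (bounds_eraseIdx h0 _) (bounds_eraseIdx h1 _) (sorted_eraseIdx hs _)
        (θ'+2) (t-1) (u-1) (by omega) (Or.inl (by omega)) (by omega) hu'' ht''
      rw [hrt, hru, show θ' + 2 - 1 = θ' + 1 by omega, show u - 1 - 1 = u - 2 by omega] at sub2
      -- combine
      have hd0 : 0 ≤ q[t-1]'htn := h0 _ (List.getElem_mem _)
      have hd1 : q[t-1]'htn ≤ 1 := h1 _ (List.getElem_mem _)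
      rw [show θ' + 2 - 1 = θ' + 1 by omega, e1, e2, e3]
      nlinarith [mul_le_mul_of_nonneg_left sub1 hd0,
        mul_le_mul_of_nonneg_left sub2 (show (0:ℝ) ≤ 1 - q[t-1]'htn by linarith)]
  · -- pattern B : t + θ + 1 = n
    obtain ⟨θ', rfl⟩ : ∃ θ', θ = θ' + 1 := ⟨θ - 1, by omega⟩
    have hu1' : u - 1 < (q.eraseIdx t).length := by omega
    have step1 : cost f (θ'+1) (q.eraseIdx t) ≤ f (q[u]'hu)
        + (q[u]'hu) * cost f θ' ((q.eraseIdx t).eraseIdx (u-1))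
        + (1 - q[u]'hu) * cost f (θ'+1) ((q.eraseIdx t).eraseIdx (u-1)) := by
      have h := cost_le_term f (θ := θ') (by omega) hu1'
      rwa [getElem_erase_ge' q (by omega) (show u - 1 + 1 = u by omega) hu1' hu] at h
    have hcomm : (q.eraseIdx u).eraseIdx t = (q.eraseIdx t).eraseIdx (u-1) :=
      erase_comm' q (show t ≤ u - 1 by omega) (show u - 1 + 1 = u by omega) hu
    have step2 : cost f (θ'+1) (q.eraseIdx u) = f (q[t]'ht)
        + (q[t]'ht) * cost f θ' ((q.eraseIdx t).eraseIdx (u-1))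
        + (1 - q[t]'ht) * cost f (θ'+1) ((q.eraseIdx t).eraseIdx (u-1)) := by
      have h := hMP (q.length - 1) (by omega) (q.eraseIdx u) (by omega)
        (bounds_eraseIdx h0 u) (bounds_eraseIdx h1 u) (sorted_eraseIdx hs u)
        (θ'+1) t (by omega) (by omega) (by omega)
      rwa [getElem_erase_lt' q htu (by omega) ht, hcomm, Nat.add_sub_cancel] at h
    rw [Nat.add_sub_cancel, step2]
    nlinarith [mul_le_mul_of_nonneg_left step1 (show (0:ℝ) ≤ 1 - q[t]'ht by linarith)]
theorem MP_all {f : ℝ → ℝ} (hf0 : ∀ x ∈ Set.Icc (0:ℝ) 1, 0 ≤ f x)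
    (hfs : ∀ x ∈ Set.Icc (0:ℝ) 1, f x = f (1 - x))
    (hfm : AntitoneOn (fun x => f x / x) (Set.Ioc (0:ℝ) 1)) :
    ∀ n : ℕ, MP f n := by
  intro n
  induction n using Nat.strong_induction_on with
  | _ n IH =>
  intro q hqn h0 h1 hs θ t hθ hpat ht
  obtain ⟨θ', rfl⟩ : ∃ θ', θ = θ' + 1 := ⟨θ - 1, by omega⟩
  rw [Nat.add_sub_cancel, cost_succ f (by omega)]
  have hMP : ∀ m, m < q.length → MP f m := fun m hm => IH m (by omega)
  have hNE : Nonempty (Fin q.length) := ⟨⟨t, ht⟩⟩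
  apply le_antisymm
  · exact ciInf_le (Set.Finite.bddBelow (Set.finite_range _)) (⟨t, ht⟩ : Fin q.length)
  · apply le_ciInf
    rintro ⟨i, hi⟩
    simp only
    rcases lt_trichotomy i t with hit | rfl | hti
    · -- i < t
      have B2 := L4p hf0 hfm n IH q hqn h0 h1 hs θ' t i (by omega) hit ht hi
      have B3 := L4 (q := q) hMP h0 h1 hs (θ := θ'+1) (by omega) (by omega) hit ht hi
      rw [Nat.add_sub_cancel] at B3
      linarith
    · exact le_rfl
    · -- i > t
      have B2 := L4bp (q := q) hMP h0 h1 hs (θ := θ'+1) (by omega) (by omega) hti hi ht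
      have B3 := L4b hf0 hfs hfm n IH q hqn h0 h1 hs (θ'+1) t i (by omega)
        (Or.inl (by omega)) hti hi ht
      rw [Nat.add_sub_cancel] at B2 B3
      linarith

/-- Lemma 4 of the paper: for `1 ≤ i ≤ k ≤ m-1` (1-based indices),
`(1-p_{k+1}) C_f(m-k; p_{-(k+1)}) - (1-p_i) C_f(m-k; p_{-i})` is bounded by
`(p_i - p_{k+1}) C_f(m-k-1; p_{-(i,k+1)}) + (1-p_{k+1}) f(p_i) - (1-p_i) f(p_{k+1})`. -/
theorem stmt_4 (f : ℝ → ℝ)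
    (hf_nonneg : ∀ x ∈ Set.Icc (0:ℝ) 1, 0 ≤ f x)
    (hf_sym : ∀ x ∈ Set.Icc (0:ℝ) 1, f x = f (1 - x))
    (hf_mono : AntitoneOn (fun x => f x / x) (Set.Ioc (0:ℝ) 1))
    (m : ℕ) (p : Fin m → ℝ)
    (hp0 : ∀ i, 0 ≤ p i) (hp1 : ∀ i, p i ≤ 1) (hsorted : Monotone p)
    (k i : ℕ) (hi1 : 1 ≤ i) (hik : i ≤ k) (hkm : k + 1 ≤ m) :
    (1 - p ⟨k, by omega⟩) * cost f (m - k) ((List.ofFn p).eraseIdx k)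
      - (1 - p ⟨i - 1, by omega⟩) * cost f (m - k) ((List.ofFn p).eraseIdx (i - 1))
    ≤ (p ⟨i - 1, by omega⟩ - p ⟨k, by omega⟩) *
        cost f (m - k - 1) (((List.ofFn p).eraseIdx k).eraseIdx (i - 1))
      + (1 - p ⟨k, by omega⟩) * f (p ⟨i - 1, by omega⟩)
      - (1 - p ⟨i - 1, by omega⟩) * f (p ⟨k, by omega⟩) := by
  have hlen : (List.ofFn p).length = m := by simp
  have h0 : ∀ x ∈ List.ofFn p, 0 ≤ x := by
    intro x hx
    obtain ⟨j, rfl⟩ := List.mem_ofFn.mp hx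
    exact hp0 j
  have h1 : ∀ x ∈ List.ofFn p, x ≤ 1 := by
    intro x hx
    obtain ⟨j, rfl⟩ := List.mem_ofFn.mp hx
    exact hp1 j
  have hsort : (List.ofFn p).Pairwise (· ≤ ·) := List.pairwise_ofFn.mpr (fun _ _ hij => hsorted hij.le)
  have hMP : ∀ mm, mm < (List.ofFn p).length → MP f mm :=
    fun mm _ => MP_all hf_nonneg hf_sym hf_mono mm
  have hk : k < (List.ofFn p).length := by omega
  have hi : i - 1 < (List.ofFn p).length := by omega
  have H := L4 (q := List.ofFn p) hMP h0 h1 hsort (θ := m - k) (t := k) (u := i - 1)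
    (by omega) (by omega) (by omega) hk hi
  rw [List.getElem_ofFn, List.getElem_ofFn] at H
  convert H using 5 <;> simp
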